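/- Let x ∈ A with x ∉ F·1, and let u = c_0 + c_1 x + ⋯ + c_n x^n with c_0, …, c_n ∈ F and c_n ≠ 0. If u is solvable, then n = 1. (Lemma 3.7) -/

import Mathlib

open scoped BigOperators

/-- Defining relation of the Weyl algebra: `p * q = q * p + 1`. -/
inductive WeylRel (F : Type*) [CommRing F] :
    FreeAlgebra F (Fin 2) → FreeAlgebra F (Fin 2) → Prop
  | comm : WeylRel F (FreeAlgebra.ι F 0 * FreeAlgebra.ι F 1)
      (FreeAlgebra.ι F 1 * FreeAlgebra.ι F 0 + 1)

/-- The Weyl algebra over `F`. -/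
abbrev WeylAlgebra (F : Type*) [CommRing F] := RingQuot (WeylRel F)

variable (F : Type*) [Field F] [CharZero F]

/-- The generator `p` of the Weyl algebra. -/
noncomputable def Wp : WeylAlgebra F :=
  RingQuot.mkAlgHom F (WeylRel F) (FreeAlgebra.ι F 0)

/-- The generator `q` of the Weyl algebra. -/
noncomputable def Wq : WeylAlgebra F :=
  RingQuot.mkAlgHom F (WeylRel F) (FreeAlgebra.ι F 1)

/-- `x` is solvable if `[x, y] = 1` for some `y`. -/
def Solvable (x : WeylAlgebra F) : Prop := ∃ y : WeylAlgebra F, x * y - y * x = 1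

/-- The centralizer `C(x)`. -/
def Cset (x : WeylAlgebra F) : Set (WeylAlgebra F) := {y | x * y - y * x = 0}

/-- `N(x) = {y | (ad x)^n y = 0 for some n ≥ 1}`. -/
def Nset (x : WeylAlgebra F) : Set (WeylAlgebra F) :=
  {y | ∃ n : ℕ, 1 ≤ n ∧ (fun z => x * z - z * x)^[n] y = 0}

/-- `D(x) = {y | [x,y] = λ y for some scalar λ}`. -/
def Dset (x : WeylAlgebra F) : Set (WeylAlgebra F) :=
  {y | ∃ c : F, x * y - y * x = c • y}

def Delta1 : Set (WeylAlgebra F) :=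
  {x | x ∉ Set.range (algebraMap F (WeylAlgebra F)) ∧
    Nset F x = Set.univ ∧ Dset F x = Cset F x}

def Delta2 : Set (WeylAlgebra F) :=
  {x | x ∉ Set.range (algebraMap F (WeylAlgebra F)) ∧
    Nset F x ≠ Set.univ ∧ Nset F x ≠ Cset F x ∧ Dset F x = Cset F x}

/-- The graded component `A_s = {a | [pq, a] = s • a}`. -/
def Wgrade (s : ℤ) : Set (WeylAlgebra F) :=
  {a | (Wp F * Wq F) * a - a * (Wp F * Wq F) = s • a}

/-- The monomial `p^i q^j`. -/
noncomputable def Wmono (i j : ℕ) : WeylAlgebra F := Wp F ^ i * Wq F ^ j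

/-- `α` is the coordinate family of `x` in the basis `p^i q^j`. -/
def Represents (α : (ℕ × ℕ) →₀ F) (x : WeylAlgebra F) : Prop :=
  x = α.sum fun ij c => c • Wmono F ij.1 ij.2

/-- `v_{ρ,σ}(x) = max { iρ + jσ | (i,j) ∈ E(x) }`. -/
def vdeg (α : (ℕ × ℕ) →₀ F) (ρ σ : ℕ) : ℕ :=
  α.support.sup fun ij => ij.1 * ρ + ij.2 * σ

/-- `E_{ρ,σ}(x)`. -/
def Eset (α : (ℕ × ℕ) →₀ F) (ρ σ : ℕ) : Finset (ℕ × ℕ) :=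
  α.support.filter fun ij => ij.1 * ρ + ij.2 * σ = vdeg F α ρ σ

/-- The `(ρ,σ)`-polynomial of `x`, an element of `F[X,Y]`. -/
noncomputable def wpoly (α : (ℕ × ℕ) →₀ F) (ρ σ : ℕ) : MvPolynomial (Fin 2) F :=
  ∑ ij ∈ Eset F α ρ σ,
    MvPolynomial.monomial (Finsupp.single 0 ij.1 + Finsupp.single 1 ij.2) (α ij)

/-- The `(ρ,σ)`-term of `x`, an element of the Weyl algebra. -/
noncomputable def wterm (α : (ℕ × ℕ) →₀ F) (ρ σ : ℕ) : WeylAlgebra F :=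
  ∑ ij ∈ Eset F α ρ σ, α ij • Wmono F ij.1 ij.2

namespace L37
open Polynomial

variable {F : Type*} [Field F] [CharZero F]

/-- basis vector -/
noncomputable def ee (F : Type*) [Field F] (m : ℤ) : ℤ →₀ F := Finsupp.single m 1

/-- `D` is represented by the coefficient family `c`. -/
def Rep (D : Module.End F (ℤ →₀ F)) (c : ℤ →₀ Polynomial F) : Prop :=
  ∀ m : ℤ, D (ee F m) = c.sum fun s p => p.eval (m : F) • ee F (m + s)

/-- `D` preserves the nonnegative part. -/
def Pos (D : Module.End F (ℤ →₀ F)) : Prop :=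
  ∀ m : ℤ, 0 ≤ m → ∀ k : ℤ, k < 0 → (D (ee F m)) k = 0

set_option linter.unusedSectionVars false

lemma ee_ne_zero (m : ℤ) : ee F m ≠ 0 := by
  intro h
  have := DFunLike.congr_fun h m
  simp [ee, Finsupp.single_apply] at this

lemma rep_coeff {D : Module.End F (ℤ →₀ F)} {c : ℤ →₀ Polynomial F} (h : Rep D c)
    (s m : ℤ) : (D (ee F m)) (m + s) = (c s).eval (m : F) := by
  rw [h m, Finsupp.sum_apply]
  rw [Finsupp.sum]
  rw [Finset.sum_eq_single s]
  · by_cases hs : s ∈ c.support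
    · simp [ee, Finsupp.single_apply]
    · have : c s = 0 := Finsupp.notMem_support_iff.mp hs
      simp [this]
  · intro t _ hts
    have : (m + t : ℤ) ≠ m + s := by omega
    simp [ee, Finsupp.single_apply, this]
  · intro hs
    have : c s = 0 := Finsupp.notMem_support_iff.mp hs
    simp [this]

lemma rep_unique {D : Module.End F (ℤ →₀ F)} {c c' : ℤ →₀ Polynomial F}
    (h : Rep D c) (h' : Rep D c') : c = c' := by
  ext s k
  suffices hs : c s = c' s by rw [hs]
  have heval : ∀ m : ℤ, (c s).eval (m : F) = (c' s).eval (m : F) := fun m => by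
    rw [← rep_coeff h s m, ← rep_coeff h' s m]
  have : c s - c' s = 0 := by
    apply Polynomial.eq_zero_of_infinite_isRoot
    apply Set.Infinite.mono (s := Set.range (fun m : ℤ => (m : F)))
    · rintro _ ⟨m, rfl⟩
      simp [Polynomial.IsRoot, heval m]
    · exact Set.infinite_range_of_injective Int.cast_injective
  have := sub_eq_zero.mp this
  rw [this]


lemma pos_apply {D : Module.End F (ℤ →₀ F)} (hD : Pos D) (v : ℤ →₀ F)
    (hv : ∀ k : ℤ, k < 0 → v k = 0) : ∀ k : ℤ, k < 0 → (D v) k = 0 := by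
  intro k hk
  have hv' : D v = v.sum fun i a => a • D (ee F i) := by
    conv_lhs => rw [← Finsupp.sum_single v]
    rw [map_finsuppSum]
    apply Finsupp.sum_congr
    intro i _
    rw [← Finsupp.smul_single_one i (v i), map_smul]
    rfl
  rw [hv', Finsupp.sum_apply]
  rw [Finsupp.sum]
  apply Finset.sum_eq_zero
  intro i hi
  have hi0 : 0 ≤ i := by
    by_contra hneg
    exact (Finsupp.mem_support_iff.mp hi) (hv i (by omega))
  simp only [Finsupp.smul_apply]
  rw [hD i hi0 k hk, smul_zero]

lemma pos_mul {D D' : Module.End F (ℤ →₀ F)} (h : Pos D) (h' : Pos D') :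
    Pos (D * D') := by
  intro m hm k hk
  have : (D * D') (ee F m) = D (D' (ee F m)) := rfl
  rw [this]
  exact pos_apply h _ (fun k' hk' => h' m hm k' hk') k hk

lemma pos_add {D D' : Module.End F (ℤ →₀ F)} (h : Pos D) (h' : Pos D') :
    Pos (D + D') := by
  intro m hm k hk
  simp only [LinearMap.add_apply, Finsupp.add_apply, h m hm k hk, h' m hm k hk, add_zero]

lemma pos_sub {D D' : Module.End F (ℤ →₀ F)} (h : Pos D) (h' : Pos D') :
    Pos (D - D') := by
  intro m hm k hk
  simp only [LinearMap.sub_apply, Finsupp.sub_apply, h m hm k hk, h' m hm k hk, sub_zero]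

lemma pos_smul {D : Module.End F (ℤ →₀ F)} (h : Pos D) (a : F) : Pos (a • D) := by
  intro m hm k hk
  simp only [LinearMap.smul_apply, Finsupp.smul_apply, h m hm k hk, smul_zero]

lemma pos_one : Pos (1 : Module.End F (ℤ →₀ F)) := by
  intro m hm k hk
  have : (1 : Module.End F (ℤ →₀ F)) (ee F m) = ee F m := rfl
  rw [this]
  simp [ee, Finsupp.single_apply]
  omega

lemma pos_zero : Pos (0 : Module.End F (ℤ →₀ F)) := by
  intro m hm k hk; simp

/-- sums, smul, sub closure of Rep -/
lemma rep_add {D D' : Module.End F (ℤ →₀ F)} {c c' : ℤ →₀ Polynomial F}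
    (h : Rep D c) (h' : Rep D' c') : Rep (D + D') (c + c') := by
  intro m
  rw [LinearMap.add_apply, h m, h' m]
  rw [Finsupp.sum_add_index' (by intro a; simp) (by intro a b₁ b₂; simp [add_smul])]

lemma rep_smul {D : Module.End F (ℤ →₀ F)} {c : ℤ →₀ Polynomial F}
    (h : Rep D c) (a : F) : Rep (a • D) (a • c) := by
  intro m
  rw [LinearMap.smul_apply, h m, Finsupp.smul_sum]
  rw [Finsupp.sum_smul_index' (by intro i; simp)]
  apply Finsupp.sum_congr
  intro s _
  simp [smul_smul]

lemma rep_sub {D D' : Module.End F (ℤ →₀ F)} {c c' : ℤ →₀ Polynomial F}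
    (h : Rep D c) (h' : Rep D' c') : Rep (D - D') (c - c') := by
  intro m
  rw [LinearMap.sub_apply, h m, h' m,
    Finsupp.sum_sub_index (fun a b₁ b₂ => by simp [sub_smul])]

lemma rep_zero : Rep (0 : Module.End F (ℤ →₀ F)) 0 := by
  intro m; simp

lemma rep_one : Rep (1 : Module.End F (ℤ →₀ F)) (Finsupp.single 0 1) := by
  intro m
  rw [Finsupp.sum_single_index (by simp)]
  simp [Module.End.one_apply]

/-- convolution of coefficient families, corresponding to composition -/
noncomputable def conv (c c' : ℤ →₀ Polynomial F) : ℤ →₀ Polynomial F :=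
  c.sum fun s p => c'.sum fun t q =>
    Finsupp.single (s + t) ((p.comp (X + C (t : F))) * q)

lemma rep_mul {D D' : Module.End F (ℤ →₀ F)} {c c' : ℤ →₀ Polynomial F}
    (h : Rep D c) (h' : Rep D' c') : Rep (D * D') (conv c c') := by
  intro m
  have hmul : (D * D') (ee F m) = D (D' (ee F m)) := rfl
  rw [hmul, h' m, map_finsuppSum, conv,
    Finsupp.sum_sum_index (fun a => by simp) (fun a b₁ b₂ => by simp [add_smul])]
  have hstep : (c.sum fun s p => (c'.sum fun t q =>
        Finsupp.single (s + t) ((p.comp (X + C (t : F))) * q)).sum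
        fun r u => u.eval (m : F) • ee F (m + r))
      = c.sum fun s p => c'.sum fun t q =>
        ((p.comp (X + C (t : F))) * q).eval (m : F) • ee F (m + (s + t)) := by
    apply Finsupp.sum_congr
    intro s _
    rw [Finsupp.sum_sum_index (fun a => by simp) (fun a b₁ b₂ => by simp [add_smul])]
    apply Finsupp.sum_congr
    intro t _
    rw [Finsupp.sum_single_index (by simp)]
  rw [hstep, Finsupp.sum_comm]
  apply Finsupp.sum_congr
  intro t ht
  rw [map_smul, h (m + t), Finsupp.smul_sum]
  apply Finsupp.sum_congr
  intro s hs
  simp only [Polynomial.eval_mul, Polynomial.eval_comp, Polynomial.eval_add,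
    Polynomial.eval_X, Polynomial.eval_C]
  rw [smul_smul]
  congr 1
  · push_cast; ring
  · congr 1; omega


/-! ### degree bounds and leading symbols -/

/-- weight bound: every coefficient satisfies `2 deg + s ≤ k`. -/
def Bd (k : ℤ) (c : ℤ →₀ Polynomial F) : Prop :=
  ∀ s ∈ c.support, 2 * ((c s).natDegree : ℤ) + s ≤ k

/-- extract the coefficient of `m^(j/2)` when `j` is even and nonnegative -/
noncomputable def epoly (j : ℤ) (p : Polynomial F) : F :=
  if 0 ≤ j ∧ 2 ∣ j then p.coeff (j / 2).toNat else 0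

@[simp] lemma epoly_zero (j : ℤ) : epoly j (0 : Polynomial F) = 0 := by
  unfold epoly; split <;> simp

lemma epoly_add (j : ℤ) (p q : Polynomial F) :
    epoly j (p + q) = epoly j p + epoly j q := by
  unfold epoly; split <;> simp

/-- the leading symbol at level `k`, a Laurent polynomial -/
noncomputable def tau (k : ℤ) (c : ℤ →₀ Polynomial F) : AddMonoidAlgebra F ℤ :=
  c.sum fun s p => AddMonoidAlgebra.single s (epoly (k - s) p)

lemma tau_single (k r : ℤ) (u : Polynomial F) :
    tau k (Finsupp.single r u) = AddMonoidAlgebra.single r (epoly (k - r) u) := by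
  unfold tau
  by_cases hu : u = 0
  · simp [hu]
  · rw [Finsupp.sum_single_index (by simp)]

lemma tau_add (k : ℤ) (c c' : ℤ →₀ Polynomial F) :
    tau k (c + c') = tau k c + tau k c' := by
  unfold tau
  rw [Finsupp.sum_add_index' (fun a => by simp) (fun a b₁ b₂ => by simp [epoly_add, AddMonoidAlgebra.single_add])]

@[simp] lemma tau_zero (k : ℤ) : tau k (0 : ℤ →₀ Polynomial F) = 0 := by
  unfold tau; simp

lemma tau_smul (k : ℤ) (a : F) (c : ℤ →₀ Polynomial F) :
    tau k (a • c) = a • tau k c := by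
  unfold tau
  rw [Finsupp.sum_smul_index' (fun i => by simp), Finsupp.smul_sum]
  apply Finsupp.sum_congr
  intro s _
  rw [AddMonoidAlgebra.smul_single]
  congr 1
  unfold epoly
  split <;> simp

lemma tau_apply_self (k : ℤ) (c : ℤ →₀ Polynomial F) (s₀ : ℤ) :
    (tau k c).coeff s₀ = epoly (k - s₀) (c s₀) := by
  unfold tau
  rw [Finsupp.sum, AddMonoidAlgebra.coeff_sum, Finsupp.finset_sum_apply, Finset.sum_eq_single s₀
    (fun t _ hts => by rw [AddMonoidAlgebra.coeff_single, Finsupp.single_apply, if_neg hts])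
    (fun hs => by rw [Finsupp.notMem_support_iff.mp hs, epoly_zero, AddMonoidAlgebra.single_zero]; rfl)]
  rw [AddMonoidAlgebra.coeff_single]
  exact Finsupp.single_eq_same

lemma tau_eq_zero_of_bd_lt {k K : ℤ} {c : ℤ →₀ Polynomial F}
    (hbd : Bd k c) (hlt : k < K) : tau K c = 0 := by
  unfold tau
  rw [Finsupp.sum]
  apply Finset.sum_eq_zero
  intro s hs
  have hb := hbd s hs
  have : epoly (K - s) (c s) = 0 := by
    unfold epoly
    split
    · next hcond =>
      apply Polynomial.coeff_eq_zero_of_natDegree_lt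
      omega
    · rfl
  rw [this, AddMonoidAlgebra.single_zero]

/-- Bd lemmas -/
lemma bd_mono {k k' : ℤ} {c : ℤ →₀ Polynomial F} (h : Bd k c) (hk : k ≤ k') : Bd k' c :=
  fun s hs => le_trans (h s hs) hk

lemma bd_add {k : ℤ} {c c' : ℤ →₀ Polynomial F} (h : Bd k c) (h' : Bd k c') :
    Bd k (c + c') := by
  intro s hs
  have hne : (c + c') s ≠ 0 := Finsupp.mem_support_iff.mp hs
  rw [Finsupp.add_apply] at hne ⊢
  by_cases h1 : c s = 0
  · rw [h1, zero_add] at hne ⊢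
    exact h' s (Finsupp.mem_support_iff.mpr hne)
  by_cases h2 : c' s = 0
  · rw [h2, add_zero] at hne ⊢
    exact h s (Finsupp.mem_support_iff.mpr h1)
  · have hb1 := h s (Finsupp.mem_support_iff.mpr h1)
    have hb2 := h' s (Finsupp.mem_support_iff.mpr h2)
    have hdeg : (c s + c' s).natDegree ≤ max (c s).natDegree (c' s).natDegree :=
      Polynomial.natDegree_add_le _ _
    rcases max_choice (c s).natDegree (c' s).natDegree with hmx | hmx <;>
      rw [hmx] at hdeg <;> omega

lemma bd_zero (k : ℤ) : Bd k (0 : ℤ →₀ Polynomial F) := by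
  intro s hs
  simp at hs

lemma bd_single {k r : ℤ} {u : Polynomial F} (h : 2 * (u.natDegree : ℤ) + r ≤ k) :
    Bd k (Finsupp.single r u) := by
  intro s hs
  rcases Finset.mem_singleton.mp (Finsupp.support_single_subset hs) with rfl
  rw [Finsupp.single_eq_same]
  exact h

lemma bd_smul {k : ℤ} {c : ℤ →₀ Polynomial F} (h : Bd k c) (a : F) : Bd k (a • c) := by
  intro s hs
  have hne : (a • c) s ≠ 0 := Finsupp.mem_support_iff.mp hs
  have happ : (a • c) s = a • c s := rfl
  rw [happ] at hne ⊢
  have h1 : c s ≠ 0 := by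
    intro h0; rw [h0, smul_zero] at hne; exact hne rfl
  have hb := h s (Finsupp.mem_support_iff.mpr h1)
  have hdeg := Polynomial.natDegree_smul_le a (c s)
  omega


/-! ### coefficient lemmas for products and shifts -/

lemma coeff_mul_of_le {P Q : Polynomial F} {a b : ℕ}
    (hP : P.natDegree ≤ a) (hQ : Q.natDegree ≤ b) :
    (P * Q).coeff (a + b) = P.coeff a * Q.coeff b := by
  rcases lt_or_eq_of_le hP with hP' | hP'
  · rw [Polynomial.coeff_eq_zero_of_natDegree_lt hP', zero_mul,
      Polynomial.coeff_eq_zero_of_natDegree_lt]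
    calc (P * Q).natDegree ≤ P.natDegree + Q.natDegree := Polynomial.natDegree_mul_le
      _ < a + b := by omega
  rcases lt_or_eq_of_le hQ with hQ' | hQ'
  · rw [Polynomial.coeff_eq_zero_of_natDegree_lt hQ', mul_zero,
      Polynomial.coeff_eq_zero_of_natDegree_lt]
    calc (P * Q).natDegree ≤ P.natDegree + Q.natDegree := Polynomial.natDegree_mul_le
      _ < a + b := by omega
  subst hP' hQ'
  exact Polynomial.coeff_mul_degree_add_degree P Q

lemma coeff_comp_top {p : Polynomial F} {t : F} {a : ℕ} (hp : p.natDegree ≤ a) :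
    (p.comp (X + C t)).coeff a = p.coeff a := by
  rw [Polynomial.comp_eq_sum_left, Polynomial.sum, Polynomial.finset_sum_coeff]
  rw [Finset.sum_eq_single a]
  · by_cases ha : a ∈ p.support
    · have hmon : ((X + C t) ^ a).Monic := (Polynomial.monic_X_add_C t).pow a
      have hdeg : ((X + C t) ^ a).natDegree = a := by
        rw [Polynomial.natDegree_pow, Polynomial.natDegree_X_add_C, mul_one]
      have h1 := hmon.coeff_natDegree
      rw [hdeg] at h1
      rw [Polynomial.coeff_C_mul, h1, mul_one]
    · have h0 : p.coeff a = 0 := Polynomial.notMem_support_iff.mp ha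
      rw [h0]
      simp
  · intro k hk hka
    have hkd : k ≤ p.natDegree := Polynomial.le_natDegree_of_mem_supp k hk
    have hdeg : ((X + C t) ^ k).natDegree = k := by
      rw [Polynomial.natDegree_pow, Polynomial.natDegree_X_add_C, mul_one]
    have h2 : ((X + C t) ^ k).coeff a = 0 :=
      Polynomial.coeff_eq_zero_of_natDegree_lt (by omega)
    rw [Polynomial.coeff_C_mul, h2, mul_zero]
  · intro ha
    have h0 : p.coeff a = 0 := Polynomial.notMem_support_iff.mp ha
    rw [h0]
    simp

/-- the key pointwise multiplicativity of `epoly` -/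
lemma epoly_key {p q : Polynomial F} {j j' : ℤ} (t : F)
    (hp : p ≠ 0 → 2 * (p.natDegree : ℤ) ≤ j) (hq : q ≠ 0 → 2 * (q.natDegree : ℤ) ≤ j') :
    epoly (j + j') ((p.comp (X + C t)) * q) = epoly j p * epoly j' q := by
  by_cases hp0 : p = 0
  · simp [hp0]
  by_cases hq0 : q = 0
  · simp [hq0]
  have hj := hp hp0
  have hj' := hq hq0
  have hdp : (0:ℤ) ≤ (p.natDegree : ℤ) := by positivity
  have hdq : (0:ℤ) ≤ (q.natDegree : ℤ) := by positivity
  have hcomp_deg : (p.comp (X + C t)).natDegree ≤ p.natDegree := by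
    calc (p.comp (X + C t)).natDegree ≤ p.natDegree * (X + C t).natDegree :=
          Polynomial.natDegree_comp_le
      _ = p.natDegree := by rw [Polynomial.natDegree_X_add_C, mul_one]
  by_cases h2j : 2 ∣ j
  · by_cases h2j' : 2 ∣ j'
    · unfold epoly
      rw [if_pos ⟨by omega, by omega⟩, if_pos ⟨by omega, h2j⟩, if_pos ⟨by omega, h2j'⟩]
      have htn : ((j + j')/2).toNat = (j/2).toNat + (j'/2).toNat := by omega
      rw [htn]
      have h1 : (p.comp (X + C t)).natDegree ≤ (j/2).toNat := by omega
      have h2 : q.natDegree ≤ (j'/2).toNat := by omega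
      rw [coeff_mul_of_le h1 h2, coeff_comp_top (by omega)]
    · have hz : epoly j' q = 0 := by unfold epoly; rw [if_neg (by omega)]
      have hz2 : epoly (j + j') ((p.comp (X + C t)) * q) = 0 := by
        unfold epoly; rw [if_neg (by omega)]
      rw [hz, hz2, mul_zero]
  · by_cases h2j' : 2 ∣ j'
    · have hz : epoly j p = 0 := by unfold epoly; rw [if_neg (by omega)]
      have hz2 : epoly (j + j') ((p.comp (X + C t)) * q) = 0 := by
        unfold epoly; rw [if_neg (by omega)]
      rw [hz, hz2, zero_mul]
    · have hz : epoly j p = 0 := by unfold epoly; rw [if_neg (by omega)]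
      have hz2 : epoly (j + j') ((p.comp (X + C t)) * q)
          = ((p.comp (X + C t)) * q).coeff (((j + j')/2).toNat) := by
        unfold epoly; rw [if_pos ⟨by omega, by omega⟩]
      rw [hz, hz2, zero_mul]
      apply Polynomial.coeff_eq_zero_of_natDegree_lt
      have hml := Polynomial.natDegree_mul_le (p := p.comp (X + C t)) (q := q)
      have hodd1 : 2 * (p.natDegree : ℤ) ≤ j - 1 := by omega
      have hodd2 : 2 * (q.natDegree : ℤ) ≤ j' - 1 := by omega
      omega

/-! ### finset sum helpers -/

lemma rep_finsetSum {ι : Type*} (s : Finset ι) (D : ι → Module.End F (ℤ →₀ F))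
    (c : ι → (ℤ →₀ Polynomial F)) (h : ∀ i ∈ s, Rep (D i) (c i)) :
    Rep (∑ i ∈ s, D i) (∑ i ∈ s, c i) := by
  classical
  induction s using Finset.induction_on with
  | empty => simpa using rep_zero
  | insert _ _ hx ih =>
    rw [Finset.sum_insert hx, Finset.sum_insert hx]
    exact rep_add (h _ (Finset.mem_insert_self _ _))
      (ih fun i hi => h i (Finset.mem_insert_of_mem hi))

lemma bd_finsetSum {ι : Type*} {k : ℤ} (s : Finset ι) (c : ι → (ℤ →₀ Polynomial F))
    (h : ∀ i ∈ s, Bd k (c i)) : Bd k (∑ i ∈ s, c i) := by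
  classical
  induction s using Finset.induction_on with
  | empty => simpa using bd_zero k
  | insert _ _ hx ih =>
    rw [Finset.sum_insert hx]
    exact bd_add (h _ (Finset.mem_insert_self _ _))
      (ih fun i hi => h i (Finset.mem_insert_of_mem hi))

lemma tau_finsetSum {ι : Type*} (k : ℤ) (s : Finset ι) (c : ι → (ℤ →₀ Polynomial F)) :
    tau k (∑ i ∈ s, c i) = ∑ i ∈ s, tau k (c i) := by
  classical
  induction s using Finset.induction_on with
  | empty => simp
  | insert _ _ hx ih =>
    rw [Finset.sum_insert hx, Finset.sum_insert hx, tau_add, ih]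

/-! ### Bd and tau for convolutions -/

lemma bd_conv {k l : ℤ} {c c' : ℤ →₀ Polynomial F} (h : Bd k c) (h' : Bd l c') :
    Bd (k + l) (conv c c') := by
  unfold conv
  rw [Finsupp.sum]
  apply bd_finsetSum
  intro s hs
  rw [Finsupp.sum]
  apply bd_finsetSum
  intro t ht
  apply bd_single
  have h1 := h s hs
  have h2 := h' t ht
  have hcomp_deg : ((c s).comp (X + C (t : F))).natDegree ≤ (c s).natDegree := by
    calc ((c s).comp (X + C (t : F))).natDegree
        ≤ (c s).natDegree * (X + C (t : F)).natDegree := Polynomial.natDegree_comp_le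
      _ = (c s).natDegree := by rw [Polynomial.natDegree_X_add_C, mul_one]
  have hmul := Polynomial.natDegree_mul_le (p := (c s).comp (X + C (t : F))) (q := c' t)
  omega

lemma tau_conv {k l : ℤ} {c c' : ℤ →₀ Polynomial F} (h : Bd k c) (h' : Bd l c') :
    tau (k + l) (conv c c') = tau k c * tau l c' := by
  unfold conv
  rw [Finsupp.sum, tau_finsetSum]
  have hL : ∀ s ∈ c.support,
      tau (k + l) (c'.sum fun t q => Finsupp.single (s + t) ((c s).comp (X + C (t : F)) * q))
      = ∑ t ∈ c'.support,
          AddMonoidAlgebra.single (s + t) (epoly (k - s) (c s) * epoly (l - t) (c' t)) := by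
    intro s hs
    rw [Finsupp.sum, tau_finsetSum]
    apply Finset.sum_congr rfl
    intro t ht
    rw [tau_single]
    congr 1
    have hkey := epoly_key (p := c s) (q := c' t) (j := k - s) (j' := l - t) (t : F)
      (fun _ => by have := h s hs; omega) (fun _ => by have := h' t ht; omega)
    rw [show k + l - (s + t) = (k - s) + (l - t) by ring, hkey]
  rw [Finset.sum_congr rfl hL]
  unfold tau
  rw [Finsupp.sum, Finsupp.sum, Finset.sum_mul_sum]
  apply Finset.sum_congr rfl
  intro s _
  apply Finset.sum_congr rfl
  intro t _
  exact (AddMonoidAlgebra.single_mul_single ..).symm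


/-! ### weight of a nonzero family, and positivity -/

/-- the weight (Bernstein degree) of a nonzero coefficient family -/
noncomputable def wdeg (c : ℤ →₀ Polynomial F) (hc : c ≠ 0) : ℤ :=
  c.support.sup' (Finsupp.support_nonempty_iff.mpr hc)
    (fun s => 2 * ((c s).natDegree : ℤ) + s)

lemma bd_wdeg (c : ℤ →₀ Polynomial F) (hc : c ≠ 0) : Bd (wdeg c hc) c :=
  fun s hs => Finset.le_sup' (fun s => 2 * ((c s).natDegree : ℤ) + s) hs

lemma tau_wdeg_ne_zero (c : ℤ →₀ Polynomial F) (hc : c ≠ 0) :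
    tau (wdeg c hc) c ≠ 0 := by
  obtain ⟨s₀, hs₀, hval⟩ := Finset.exists_mem_eq_sup'
    (Finsupp.support_nonempty_iff.mpr hc) (fun s => 2 * ((c s).natDegree : ℤ) + s)
  intro hzero
  have happ := tau_apply_self (wdeg c hc) c s₀
  rw [hzero] at happ
  have hW : wdeg c hc - s₀ = 2 * ((c s₀).natDegree : ℤ) := by
    rw [wdeg, hval]; ring
  rw [hW] at happ
  unfold epoly at happ
  rw [if_pos ⟨by positivity, ⟨_, rfl⟩⟩] at happ
  have htn : ((2 * ((c s₀).natDegree : ℤ)) / 2).toNat = (c s₀).natDegree := by omega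
  rw [htn] at happ
  have hne : c s₀ ≠ 0 := Finsupp.mem_support_iff.mp hs₀
  exact hne (Polynomial.leadingCoeff_eq_zero.mp happ.symm)

/-- negative shifts force vanishing at `0, ..., -s-1`, hence high degree. -/
lemma pos_deg_neg {D : Module.End F (ℤ →₀ F)} {c : ℤ →₀ Polynomial F}
    (h : Rep D c) (hD : Pos D) : ∀ s ∈ c.support, s < 0 → (-s).toNat ≤ (c s).natDegree := by
  intro s hs hs0
  have hroots : ∀ m : ℤ, 0 ≤ m → m + s < 0 → (c s).eval (m : F) = 0 := by
    intro m hm hms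
    rw [← rep_coeff h s m]
    exact hD m hm (m + s) hms
  have hne : c s ≠ 0 := Finsupp.mem_support_iff.mp hs
  classical
  set p := c s with hp
  have hsub : (Finset.range (-s).toNat).image (fun i : ℕ => (i : F))
      ⊆ p.roots.toFinset := by
    intro a ha
    rcases Finset.mem_image.mp ha with ⟨i, hi, rfl⟩
    rw [Multiset.mem_toFinset, Polynomial.mem_roots']
    refine ⟨hne, ?_⟩
    have hiz := hroots (i : ℤ) (by positivity) (by rw [Finset.mem_range] at hi; omega)
    rw [Polynomial.IsRoot]
    exact_mod_cast hiz
  have hinj : Function.Injective (fun i : ℕ => (i : F)) :=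
    fun a b hab => Nat.cast_injective hab
  have h2 : ((Finset.range (-s).toNat).image (fun i : ℕ => (i : F))).card
      = (-s).toNat := by
    rw [Finset.card_image_of_injective _ hinj, Finset.card_range]
  have h1 := Finset.card_le_card hsub
  have h3 := Multiset.toFinset_card_le p.roots
  have h4 := Polynomial.card_roots' p
  omega

/-- positivity: coefficients of a `Pos` operator satisfy `2 deg + s ≥ 0`. -/
lemma pos_wbound {D : Module.End F (ℤ →₀ F)} {c : ℤ →₀ Polynomial F}
    (h : Rep D c) (hD : Pos D) : ∀ s ∈ c.support, 0 ≤ 2 * ((c s).natDegree : ℤ) + s := by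
  intro s hs
  rcases le_or_gt 0 s with hs0 | hs0
  · positivity
  · have := pos_deg_neg h hD s hs hs0
    omega

lemma wdeg_nonneg {D : Module.End F (ℤ →₀ F)} {c : ℤ →₀ Polynomial F}
    (h : Rep D c) (hD : Pos D) (hc : c ≠ 0) : 0 ≤ wdeg c hc := by
  obtain ⟨s₀, hs₀⟩ := Finsupp.support_nonempty_iff.mpr hc
  calc (0:ℤ) ≤ 2 * (((c s₀).natDegree : ℤ)) + s₀ := pos_wbound h hD s₀ hs₀
    _ ≤ wdeg c hc := bd_wdeg c hc s₀ hs₀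

lemma rep_zero_imp {D : Module.End F (ℤ →₀ F)} (h : Rep D 0) : D = 0 := by
  apply Finsupp.lhom_ext
  intro m b
  have h1 : (Finsupp.single m b : ℤ →₀ F) = b • ee F m := by
    rw [ee, Finsupp.smul_single_one]
  rw [h1, map_smul, h m]
  simp

/-- dichotomy: scalar operator, or weight at least 1. -/
lemma scalar_or_wdeg_pos {D : Module.End F (ℤ →₀ F)} {c : ℤ →₀ Polynomial F}
    (h : Rep D c) (hD : Pos D) :
    (∃ a : F, D = a • (1 : Module.End F (ℤ →₀ F))) ∨
      ∃ (hc : c ≠ 0), 1 ≤ wdeg c hc := by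
  by_cases hc : c = 0
  · left
    refine ⟨0, ?_⟩
    rw [zero_smul]
    exact rep_zero_imp (hc ▸ h)
  rcases le_or_gt (wdeg c hc) 0 with hw | hw
  · left
    have hbd := bd_wdeg c hc
    have hsupp : ∀ s ∈ c.support, s = 0 ∧ (c s).natDegree = 0 := by
      intro s hs
      have h1 : 2 * ((c s).natDegree : ℤ) + s ≤ 0 := le_trans (hbd s hs) hw
      rcases lt_trichotomy s 0 with hs0 | hs0 | hs0
      · have := pos_deg_neg h hD s hs hs0
        omega
      · constructor
        · exact hs0
        · omega
      · omega
    have hsub : c.support ⊆ {0} := fun s hs => Finset.mem_singleton.mpr (hsupp s hs).1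
    have hc0 : c = Finsupp.single 0 (c 0) := Finsupp.support_subset_singleton.mp hsub
    have hc0ne : c 0 ≠ 0 := by
      intro h0
      rw [h0, Finsupp.single_zero] at hc0
      exact hc hc0
    have hdeg : (c 0).natDegree = 0 :=
      (hsupp 0 (Finsupp.mem_support_iff.mpr hc0ne)).2
    have hC : c 0 = Polynomial.C ((c 0).coeff 0) :=
      Polynomial.eq_C_of_natDegree_eq_zero hdeg
    refine ⟨(c 0).coeff 0, ?_⟩
    apply Finsupp.lhom_ext
    intro m b
    have h1 : (Finsupp.single m b : ℤ →₀ F) = b • ee F m := by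
      rw [ee, Finsupp.smul_single_one]
    rw [h1, map_smul, h m, hc0]
    rw [Finsupp.sum_single_index (by simp)]
    rw [hC]
    simp only [Polynomial.eval_C, add_zero, LinearMap.smul_apply, Module.End.one_apply]
    rw [smul_comm]
    congr 1
    rw [Finsupp.single_eq_same, Polynomial.coeff_C_zero]
  · right
    exact ⟨hc, hw⟩


/-! ### the representation of the Weyl algebra -/

noncomputable def Pop (F : Type*) [Field F] : Module.End F (ℤ →₀ F) :=
  Finsupp.lift (ℤ →₀ F) F ℤ (fun m => (m : F) • ee F (m - 1))

noncomputable def Qop (F : Type*) [Field F] : Module.End F (ℤ →₀ F) :=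
  Finsupp.lift (ℤ →₀ F) F ℤ (fun m => ee F (m + 1))

lemma Pop_apply (m : ℤ) : Pop F (ee F m) = (m : F) • ee F (m - 1) := by
  rw [Pop, ee, Finsupp.lift_apply, Finsupp.sum_single_index (by simp), one_smul]

lemma Qop_apply (m : ℤ) : Qop F (ee F m) = ee F (m + 1) := by
  rw [Qop, ee, Finsupp.lift_apply, Finsupp.sum_single_index (by simp), one_smul]

lemma rep_Pop : Rep (Pop F) (Finsupp.single (-1) (X : Polynomial F)) := by
  intro m
  rw [Pop_apply, Finsupp.sum_single_index (by simp)]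
  simp only [Polynomial.eval_X]
  have h2 : m + (-1) = m - 1 := by omega
  rw [h2]

lemma rep_Qop : Rep (Qop F) (Finsupp.single 1 (1 : Polynomial F)) := by
  intro m
  rw [Qop_apply, Finsupp.sum_single_index (by simp)]
  simp

lemma pos_Pop : Pos (Pop F) := by
  intro m hm k hk
  rw [Pop_apply]
  rcases eq_or_lt_of_le hm with h0 | h0
  · rw [← h0]
    simp
  · rw [Finsupp.smul_apply, ee, Finsupp.single_apply, if_neg (by omega), smul_zero]

lemma pos_Qop : Pos (Qop F) := by
  intro m hm k hk
  rw [Qop_apply, ee, Finsupp.single_apply, if_neg (by omega)]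

lemma weyl_rel_End : Pop F * Qop F = Qop F * Pop F + 1 := by
  apply Finsupp.lhom_ext
  intro m b
  have h1 : (Finsupp.single m b : ℤ →₀ F) = b • ee F m := by
    rw [ee, Finsupp.smul_single_one]
  have hPQ : (Pop F * Qop F) (ee F m) = ((m : F) + 1) • ee F m := by
    have : (Pop F * Qop F) (ee F m) = Pop F (Qop F (ee F m)) := rfl
    rw [this, Qop_apply, Pop_apply]
    have h2 : m + 1 - 1 = m := by omega
    rw [h2]
    push_cast
    rfl
  have hQP : (Qop F * Pop F) (ee F m) = (m : F) • ee F m := by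
    have : (Qop F * Pop F) (ee F m) = Qop F (Pop F (ee F m)) := rfl
    rw [this, Pop_apply, map_smul, Qop_apply]
    have h2 : m - 1 + 1 = m := by omega
    rw [h2]
  rw [h1, map_smul, map_smul, hPQ, LinearMap.add_apply, hQP, Module.End.one_apply,
    add_smul, one_smul, smul_add]

noncomputable def wgens (F : Type*) [Field F] : Fin 2 → Module.End F (ℤ →₀ F) :=
  ![Pop F, Qop F]

lemma wphi_rel : ∀ ⦃a b : FreeAlgebra F (Fin 2)⦄, WeylRel F a b →
    (FreeAlgebra.lift F (wgens F)) a = (FreeAlgebra.lift F (wgens F)) b := by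
  intro a b r
  cases r
  simp only [map_mul, map_add, map_one, FreeAlgebra.lift_ι_apply]
  show wgens F 0 * wgens F 1 = wgens F 1 * wgens F 0 + 1
  rw [wgens]
  simp only [Matrix.cons_val_zero, Matrix.cons_val_one, Matrix.head_cons]
  exact weyl_rel_End

noncomputable def wphi (F : Type*) [Field F] [CharZero F] :
    WeylAlgebra F →ₐ[F] Module.End F (ℤ →₀ F) :=
  RingQuot.liftAlgHom F ⟨FreeAlgebra.lift F (wgens F), wphi_rel⟩

lemma adm_range : ∀ a : WeylAlgebra F,
    (∃ c, Rep (wphi F a) c) ∧ Pos (wphi F a) := by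
  intro a
  obtain ⟨b, rfl⟩ := RingQuot.mkAlgHom_surjective F (WeylRel F) a
  rw [wphi, RingQuot.liftAlgHom_mkAlgHom_apply]
  induction b using FreeAlgebra.induction with
  | grade0 r =>
    rw [AlgHom.commutes, Algebra.algebraMap_eq_smul_one]
    exact ⟨⟨r • Finsupp.single 0 1, rep_smul rep_one r⟩, pos_smul pos_one r⟩
  | grade1 x =>
    rw [FreeAlgebra.lift_ι_apply]
    fin_cases x
    · rw [wgens]
      simp only [Matrix.cons_val_zero]
      exact ⟨⟨_, rep_Pop⟩, pos_Pop⟩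
    · rw [wgens]
      simp only [Matrix.cons_val_one, Matrix.head_cons]
      exact ⟨⟨_, rep_Qop⟩, pos_Qop⟩
  | mul a b ha hb =>
    rw [map_mul]
    obtain ⟨⟨ca, hca⟩, hpa⟩ := ha
    obtain ⟨⟨cb, hcb⟩, hpb⟩ := hb
    exact ⟨⟨_, rep_mul hca hcb⟩, pos_mul hpa hpb⟩
  | add a b ha hb =>
    rw [map_add]
    obtain ⟨⟨ca, hca⟩, hpa⟩ := ha
    obtain ⟨⟨cb, hcb⟩, hpb⟩ := hb
    exact ⟨⟨_, rep_add hca hcb⟩, pos_add hpa hpb⟩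

/-- commutator with a power -/
lemma comm_pow {R : Type*} [Ring R] (x y : R) :
    ∀ i : ℕ, x^i * y - y * x^i
      = ∑ a ∈ Finset.range i, x^a * (x*y - y*x) * x^(i-1-a) := by
  intro i
  induction i with
  | zero => simp
  | succ i ih =>
    have step : x^(i+1) * y - y * x^(i+1)
        = x * (x^i * y - y * x^i) + (x*y - y*x) * x^i := by
      rw [pow_succ']
      noncomm_ring
    rw [step, ih, Finset.mul_sum, Finset.sum_range_succ']
    congr 1
    · apply Finset.sum_congr rfl
      intro a ha
      rw [Finset.mem_range] at ha
      have h2 : i + 1 - 1 - (a + 1) = i - 1 - a := by omega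
      rw [h2, pow_succ']
      noncomm_ring
    · have h2 : i + 1 - 1 - 0 = i := by omega
      rw [h2, pow_zero, one_mul]

end L37

section Main

variable {F : Type*} [Field F] [CharZero F]

theorem main_result (x : WeylAlgebra F)
    (n : ℕ) (c : ℕ → F) (hcn : c n ≠ 0)
    (u : WeylAlgebra F) (hu : u = ∑ i ∈ Finset.range (n + 1), c i • x ^ i)
    (hsol : Solvable F u) :
    n = 1 := by
  classical
  obtain ⟨y, hy⟩ := hsol
  set X := L37.wphi F x with hXdef
  set Y := L37.wphi F y with hYdef
  set Z := X * Y - Y * X with hZdef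
  have h1 : L37.wphi F u * Y - Y * L37.wphi F u = 1 := by
    have := congrArg (L37.wphi F) hy
    simpa only [map_sub, map_mul, map_one] using this
  have hU : L37.wphi F u = ∑ i ∈ Finset.range (n + 1), c i • X ^ i := by
    rw [hu, map_sum]
    simp only [map_smul, map_pow]
    rfl
  have hone : (1 : Module.End F (ℤ →₀ F)) ≠ 0 := by
    intro h0
    have h2 := congrArg (fun D : Module.End F (ℤ →₀ F) => (D (L37.ee F 0)) 0) h0
    simp only [Module.End.one_apply, LinearMap.zero_apply, Finsupp.coe_zero,
      Pi.zero_apply] at h2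
    rw [L37.ee, Finsupp.single_eq_same] at h2
    exact one_ne_zero h2
  have hstep : ∀ i : ℕ, c i • (∑ a ∈ Finset.range i, X ^ a * Z * X ^ (i - 1 - a))
      = (c i • X ^ i) * Y - Y * (c i • X ^ i) := by
    intro i
    rw [hZdef, ← L37.comm_pow X Y i, smul_mul_assoc, mul_smul_comm, smul_sub]
  have h2 : ∑ i ∈ Finset.range (n + 1), ((c i • X ^ i) * Y - Y * (c i • X ^ i))
      = (∑ i ∈ Finset.range (n + 1), c i • X ^ i) * Y
        - Y * (∑ i ∈ Finset.range (n + 1), c i • X ^ i) := by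
    rw [Finset.sum_mul, Finset.mul_sum]
    exact Finset.sum_sub_distrib (s := Finset.range (n + 1))
      (f := fun i => (c i • X ^ i) * Y) (g := fun i => Y * (c i • X ^ i))
  have hkey : (1 : Module.End F (ℤ →₀ F)) = ∑ i ∈ Finset.range (n + 1),
      c i • (∑ a ∈ Finset.range i, X ^ a * Z * X ^ (i - 1 - a)) := by
    rw [← h1, hU, ← h2]
    exact (Finset.sum_congr rfl fun i _ => hstep i).symm
  have hn0 : n ≠ 0 := by
    rintro rfl
    rw [Finset.sum_range_one, Finset.sum_range_zero, smul_zero] at hkey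
    exact hone hkey
  obtain ⟨⟨cx, hcx⟩, hpx⟩ := L37.adm_range x
  obtain ⟨⟨cy, hcy⟩, hpy⟩ := L37.adm_range y
  rw [← hXdef] at hcx hpx
  rw [← hYdef] at hcy hpy
  rcases L37.scalar_or_wdeg_pos hcx hpx with ⟨a, hXa⟩ | ⟨hcxne, hd1⟩
  · exfalso
    have hZ0 : Z = 0 := by
      rw [hZdef, hXa]
      simp only [smul_mul_assoc, mul_smul_comm, one_mul, mul_one]
      exact sub_eq_zero_of_eq (rfl : a • Y = a • Y)
    rw [hZ0] at hkey
    simp only [mul_zero, zero_mul, Finset.sum_const_zero, smul_zero] at hkey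
    exact hone hkey
  -- x is not scalar; d ≥ 1
  set d := L37.wdeg cx hcxne with hddef
  have hbx : L37.Bd d cx := L37.bd_wdeg cx hcxne
  set hh := L37.tau d cx with hhdef
  have hh_ne : hh ≠ 0 := L37.tau_wdeg_ne_zero cx hcxne
  -- the commutator Z
  have hcz : L37.Rep Z (L37.conv cx cy - L37.conv cy cx) :=
    L37.rep_sub (L37.rep_mul hcx hcy) (L37.rep_mul hcy hcx)
  have hpz : L37.Pos Z := L37.pos_sub (L37.pos_mul hpx hpy) (L37.pos_mul hpy hpx)
  set cz := L37.conv cx cy - L37.conv cy cx with hczdef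
  by_cases hcz0 : cz = 0
  · exfalso
    have hZ0 : Z = 0 := L37.rep_zero_imp (hcz0 ▸ hcz)
    rw [hZ0] at hkey
    simp only [mul_zero, zero_mul, Finset.sum_const_zero, smul_zero] at hkey
    exact hone hkey
  set w := L37.wdeg cz hcz0 with hwdef
  have hw0 : (0:ℤ) ≤ w := L37.wdeg_nonneg hcz hpz hcz0
  have hbz : L37.Bd w cz := L37.bd_wdeg cz hcz0
  set g := L37.tau w cz with hgdef
  have hg_ne : g ≠ 0 := L37.tau_wdeg_ne_zero cz hcz0
  -- powers of X
  have hpow : ∀ j : ℕ, ∃ cp, L37.Rep (X ^ j) cp ∧ L37.Bd ((j:ℤ) * d) cp ∧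
      L37.tau ((j:ℤ) * d) cp = hh ^ j := by
    intro j
    induction j with
    | zero =>
      refine ⟨Finsupp.single 0 1, ?_, ?_, ?_⟩
      · rw [pow_zero]; exact L37.rep_one
      · simp only [Nat.cast_zero, zero_mul]
        apply L37.bd_single
        simp [Polynomial.natDegree_one]
      · rw [Nat.cast_zero, zero_mul, L37.tau_single, pow_zero]
        have he : L37.epoly ((0:ℤ) - 0) (1 : Polynomial F) = 1 := by
          unfold L37.epoly
          rw [if_pos ⟨by omega, by omega⟩]
          norm_num
        rw [he]
        rfl
    | succ j ih =>
      obtain ⟨cp, hr, hb, ht⟩ := ih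
      have hcast : ((j+1 : ℕ) : ℤ) * d = d + (j:ℤ) * d := by push_cast; ring
      refine ⟨L37.conv cx cp, ?_, ?_, ?_⟩
      · rw [pow_succ']
        exact L37.rep_mul hcx hr
      · rw [hcast]
        exact L37.bd_conv hbx hb
      · rw [hcast, L37.tau_conv hbx hb, ht, pow_succ']
  choose cp hrp hbp htp using hpow
  -- the inner sums
  have hSi : ∀ i : ℕ, ∃ ci, L37.Rep (∑ a ∈ Finset.range i, X ^ a * Z * X ^ (i - 1 - a)) ci ∧
      L37.Bd (((i:ℤ) - 1) * d + w) ci ∧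
      L37.tau (((i:ℤ) - 1) * d + w) ci = (i : F) • (hh ^ (i - 1) * g) := by
    intro i
    refine ⟨∑ a ∈ Finset.range i, L37.conv (cp a) (L37.conv cz (cp (i - 1 - a))), ?_, ?_, ?_⟩
    · apply L37.rep_finsetSum
      intro a _
      rw [mul_assoc]
      exact L37.rep_mul (hrp a) (L37.rep_mul hcz (hrp (i - 1 - a)))
    · apply L37.bd_finsetSum
      intro a ha
      rw [Finset.mem_range] at ha
      have hab : ((a:ℤ)) + ((i - 1 - a : ℕ) : ℤ) = (i:ℤ) - 1 := by omega
      have hb2 := L37.bd_conv (hbp a) (L37.bd_conv hbz (hbp (i - 1 - a)))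
      have heq : (a:ℤ) * d + (w + ((i - 1 - a : ℕ) : ℤ) * d) = ((i:ℤ) - 1) * d + w := by
        linear_combination d * hab
      rw [heq] at hb2
      exact hb2
    · rw [L37.tau_finsetSum]
      have hterm : ∀ a ∈ Finset.range i,
          L37.tau (((i:ℤ) - 1) * d + w) (L37.conv (cp a) (L37.conv cz (cp (i - 1 - a))))
          = hh ^ (i - 1) * g := by
        intro a ha
        rw [Finset.mem_range] at ha
        have hab : ((a:ℤ)) + ((i - 1 - a : ℕ) : ℤ) = (i:ℤ) - 1 := by omega
        have heq : ((i:ℤ) - 1) * d + w = (a:ℤ) * d + (w + ((i - 1 - a : ℕ) : ℤ) * d) := by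
          linear_combination (-d) * hab
        rw [heq, L37.tau_conv (hbp a) (L37.bd_conv hbz (hbp (i - 1 - a))),
          L37.tau_conv hbz (hbp (i - 1 - a)), htp, htp]
        have hexp : a + (i - 1 - a) = i - 1 := by omega
        rw [show hh ^ a * (g * hh ^ (i - 1 - a)) = hh ^ a * hh ^ (i - 1 - a) * g by ring,
          ← pow_add, hexp]
      rw [Finset.sum_congr rfl hterm, Finset.sum_const, Finset.card_range,
        ← Nat.cast_smul_eq_nsmul F]
  choose cS hrepS hbdS htauS using hSi
  set W := ((n:ℤ) - 1) * d + w with hWdef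
  set cR := ∑ i ∈ Finset.range (n + 1), c i • cS i with hcRdef
  have hrep1 : L37.Rep 1 cR := by
    rw [hkey]
    apply L37.rep_finsetSum
    intro i _
    exact L37.rep_smul (hrepS i) (c i)
  have hcR : cR = Finsupp.single 0 1 := L37.rep_unique hrep1 L37.rep_one
  have htauW : L37.tau W cR = c n • ((n : F) • (hh ^ (n - 1) * g)) := by
    rw [hcRdef, L37.tau_finsetSum, Finset.sum_eq_single n]
    · rw [L37.tau_smul, htauS n]
    · intro i hi hin
      rw [Finset.mem_range] at hi
      have hilt : i < n := by omega
      rw [L37.tau_smul]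
      have hlt : ((i:ℤ) - 1) * d + w < W := by
        have h6 : ((i:ℤ) - 1) * d < ((n:ℤ) - 1) * d :=
          mul_lt_mul_of_pos_right (by omega) (by omega)
        rw [hWdef]
        omega
      rw [L37.tau_eq_zero_of_bd_lt (hbdS i) hlt, smul_zero]
    · intro hnot
      exact absurd (Finset.self_mem_range_succ n) hnot
  have htau_ne : L37.tau W cR ≠ 0 := by
    rw [htauW]
    apply smul_ne_zero hcn
    apply smul_ne_zero (Nat.cast_ne_zero.mpr hn0)
    exact mul_ne_zero (pow_ne_zero _ hh_ne) hg_ne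
  have hW0 : W = 0 := by
    by_contra hWne
    have h5 : (0:ℤ) ≤ ((n:ℤ) - 1) * d := mul_nonneg (by omega) (by omega)
    have hWpos : 0 < W := by rw [hWdef]; omega
    apply htau_ne
    rw [hcR, L37.tau_single]
    have he : L37.epoly (W - 0) (1 : Polynomial F) = 0 := by
      unfold L37.epoly
      split
      · next hcond =>
        rw [Polynomial.coeff_one, if_neg (by omega)]
      · rfl
    rw [he, AddMonoidAlgebra.single_zero]
  have h5 : (n:ℤ) - 1 ≤ ((n:ℤ) - 1) * d := le_mul_of_one_le_right (by omega) hd1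
  omega

end Main

/-- Lemma 3.7. -/
theorem deg_eq_one_of_solvable_polynomial (x : WeylAlgebra F)
    (hx : x ∉ Set.range (algebraMap F (WeylAlgebra F)))
    (n : ℕ) (c : ℕ → F) (hcn : c n ≠ 0)
    (u : WeylAlgebra F) (hu : u = ∑ i ∈ Finset.range (n + 1), c i • x ^ i)
    (hsol : Solvable F u) :
    n = 1 := by
  exact main_result x n c hcn u hu hsol
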